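/- Let A = -i(I_{1z}I_{2x} + I_{2x}I_{3z}) and B = -i(I_{1z}I_{2y} + I_{2y}I_{3z}) in the three-spin system. Then for all real θ: exp((π/2)A) exp((θ/2)B) exp(-(π/2)A) = exp(-iθ(I_{1z}I_{2z}I_{3z} + I_{2z}/4)). -/

import Mathlib

open Matrix NormedSpace Real
open scoped Matrix Kronecker

noncomputable section

def Ix : Matrix (Fin 2) (Fin 2) ℂ := (1/2 : ℂ) • !![0, 1; 1, 0]
def Iy : Matrix (Fin 2) (Fin 2) ℂ := (1/2 : ℂ) • !![0, -Complex.I; Complex.I, 0]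
def Iz : Matrix (Fin 2) (Fin 2) ℂ := (1/2 : ℂ) • !![1, 0; 0, -1]

abbrev Spin3 := Matrix (Fin 2 × Fin 2 × Fin 2) (Fin 2 × Fin 2 × Fin 2) ℂ

/-- The operator acting as `P`, `Q`, `R` on the three tensor factors of `(ℂ²)⊗³`. -/
def triple (P Q R : Matrix (Fin 2) (Fin 2) ℂ) : Spin3 := P ⊗ₖ (Q ⊗ₖ R)

def I1x : Spin3 := triple Ix 1 1
def I1y : Spin3 := triple Iy 1 1
def I1z : Spin3 := triple Iz 1 1
def I2x : Spin3 := triple 1 Ix 1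
def I2y : Spin3 := triple 1 Iy 1
def I2z : Spin3 := triple 1 Iz 1
def I3x : Spin3 := triple 1 1 Ix
def I3y : Spin3 := triple 1 1 Iy
def I3z : Spin3 := triple 1 1 Iz

/-! ### Auxiliary 2×2 computations -/

lemma hzz : Iz * Iz = (1/4 : ℂ) • 1 := by
  ext i j; fin_cases i <;> fin_cases j <;>
    simp [Iz, Matrix.mul_apply, Fin.sum_univ_two, Matrix.one_apply] <;> norm_num

lemma hxx : Ix * Ix = (1/4 : ℂ) • 1 := by
  ext i j; fin_cases i <;> fin_cases j <;>
    simp [Ix, Matrix.mul_apply, Fin.sum_univ_two, Matrix.one_apply] <;> norm_num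

lemma hxy : Ix * Iy = (Complex.I/2) • Iz := by
  ext i j; fin_cases i <;> fin_cases j <;>
    simp [Ix, Iy, Iz, Matrix.mul_apply, Fin.sum_univ_two, Complex.ext_iff] <;> norm_num

lemma hyx : Iy * Ix = (-Complex.I/2) • Iz := by
  ext i j; fin_cases i <;> fin_cases j <;>
    simp [Ix, Iy, Iz, Matrix.mul_apply, Fin.sum_univ_two, Complex.ext_iff] <;> norm_num

lemma hzx : Iz * Ix = (Complex.I/2) • Iy := by
  ext i j; fin_cases i <;> fin_cases j <;>
    simp [Ix, Iy, Iz, Matrix.mul_apply, Fin.sum_univ_two, Complex.ext_iff] <;> norm_num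

lemma hxz : Ix * Iz = (-Complex.I/2) • Iy := by
  ext i j; fin_cases i <;> fin_cases j <;>
    simp [Ix, Iy, Iz, Matrix.mul_apply, Fin.sum_univ_two, Complex.ext_iff] <;> norm_num

lemma triple_mul (P Q R P' Q' R' : Matrix (Fin 2) (Fin 2) ℂ) :
    triple P Q R * triple P' Q' R' = triple (P*P') (Q*Q') (R*R') := by
  simp [triple, ← Matrix.mul_kronecker_mul]

lemma triple_one : triple 1 1 1 = (1 : Spin3) := by
  simp [triple, Matrix.one_kronecker_one]

/-! ### The key operators -/

def J1 : Spin3 := (-(4:ℂ)*Complex.I) • (I1z * I2x)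
def J2 : Spin3 := (-(4:ℂ)*Complex.I) • (I2x * I3z)
def Bm : Spin3 := (-Complex.I) • (I1z * I2y + I2y * I3z)
def Km : Spin3 := (-((2:ℂ))*Complex.I) • (I1z * I2z * I3z + (1/4 : ℂ) • I2z)

lemma tJ1 : J1 = (-(4:ℂ)*Complex.I) • triple Iz Ix 1 := by
  simp [J1, I1z, I2x, triple_mul]

lemma tJ2 : J2 = (-(4:ℂ)*Complex.I) • triple 1 Ix Iz := by
  simp [J2, I2x, I3z, triple_mul]

lemma tBm : Bm = (-Complex.I) • (triple Iz Iy 1 + triple 1 Iy Iz) := by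
  simp [Bm, I1z, I2y, I3z, triple_mul]

lemma tKm : Km = (-((2:ℂ))*Complex.I) • (triple Iz Iz Iz + (1/4 : ℂ) • triple 1 Iz 1) := by
  simp [Km, I1z, I2z, I3z, triple_mul]

/-- A normalization tactic for identities between sums of scalar multiples of triples. -/
lemma hJ1sq : J1 * J1 = -1 := by
  simp only [tJ1, tJ2, tBm, tKm, Matrix.smul_mul, Matrix.mul_smul, Matrix.mul_add,
    Matrix.add_mul, triple_mul, Matrix.one_mul, Matrix.mul_one, hzz, hxx, hxy, hyx, hzx, hxz,
    smul_add, smul_smul, neg_smul, smul_neg, mul_neg, neg_mul, neg_neg]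
  simp only [triple, Matrix.smul_kronecker, Matrix.kronecker_smul, smul_smul, smul_add,
    Matrix.one_kronecker_one, neg_smul, smul_neg]
  match_scalars <;> norm_num [Complex.ext_iff]

lemma hJ2sq : J2 * J2 = -1 := by
  simp only [tJ1, tJ2, tBm, tKm, Matrix.smul_mul, Matrix.mul_smul, Matrix.mul_add,
    Matrix.add_mul, triple_mul, Matrix.one_mul, Matrix.mul_one, hzz, hxx, hxy, hyx, hzx, hxz,
    smul_add, smul_smul, neg_smul, smul_neg, mul_neg, neg_mul, neg_neg]
  simp only [triple, Matrix.smul_kronecker, Matrix.kronecker_smul, smul_smul, smul_add,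
    Matrix.one_kronecker_one, neg_smul, smul_neg]
  match_scalars <;> norm_num [Complex.ext_iff]

lemma hJcomm : J1 * J2 = J2 * J1 := by
  simp only [tJ1, tJ2, Matrix.smul_mul, Matrix.mul_smul, triple_mul, Matrix.one_mul,
    Matrix.mul_one]

lemma hJ1B : J1 * Bm = Km := by
  simp only [tJ1, tJ2, tBm, tKm, Matrix.smul_mul, Matrix.mul_smul, Matrix.mul_add,
    Matrix.add_mul, triple_mul, Matrix.one_mul, Matrix.mul_one, hzz, hxx, hxy, hyx, hzx, hxz,
    smul_add, smul_smul, neg_smul, smul_neg, mul_neg, neg_mul, neg_neg]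
  simp only [triple, Matrix.smul_kronecker, Matrix.kronecker_smul, smul_smul, smul_add,
    Matrix.one_kronecker_one, neg_smul, smul_neg]
  match_scalars <;> norm_num [Complex.ext_iff]

lemma hJ2B : J2 * Bm = Km := by
  simp only [tJ1, tJ2, tBm, tKm, Matrix.smul_mul, Matrix.mul_smul, Matrix.mul_add,
    Matrix.add_mul, triple_mul, Matrix.one_mul, Matrix.mul_one, hzz, hxx, hxy, hyx, hzx, hxz,
    smul_add, smul_smul, neg_smul, smul_neg, mul_neg, neg_mul, neg_neg]
  simp only [triple, Matrix.smul_kronecker, Matrix.kronecker_smul, smul_smul, smul_add,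
    Matrix.one_kronecker_one, neg_smul, smul_neg]
  match_scalars <;> norm_num [Complex.ext_iff]

lemma hJ1K : J1 * Km = -Bm := by
  simp only [tJ1, tJ2, tBm, tKm, Matrix.smul_mul, Matrix.mul_smul, Matrix.mul_add,
    Matrix.add_mul, triple_mul, Matrix.one_mul, Matrix.mul_one, hzz, hxx, hxy, hyx, hzx, hxz,
    smul_add, smul_smul, neg_smul, smul_neg, mul_neg, neg_mul, neg_neg]
  simp only [triple, Matrix.smul_kronecker, Matrix.kronecker_smul, smul_smul, smul_add,
    Matrix.one_kronecker_one, neg_smul, smul_neg]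
  match_scalars <;> norm_num [Complex.ext_iff]

lemma hKJ1 : Km * J1 = Bm := by
  simp only [tJ1, tJ2, tBm, tKm, Matrix.smul_mul, Matrix.mul_smul, Matrix.mul_add,
    Matrix.add_mul, triple_mul, Matrix.one_mul, Matrix.mul_one, hzz, hxx, hxy, hyx, hzx, hxz,
    smul_add, smul_smul, neg_smul, smul_neg, mul_neg, neg_mul, neg_neg]
  simp only [triple, Matrix.smul_kronecker, Matrix.kronecker_smul, smul_smul, smul_add,
    Matrix.one_kronecker_one, neg_smul, smul_neg]
  match_scalars <;> norm_num [Complex.ext_iff]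

lemma hKJ2 : Km * J2 = Bm := by
  simp only [tJ1, tJ2, tBm, tKm, Matrix.smul_mul, Matrix.mul_smul, Matrix.mul_add,
    Matrix.add_mul, triple_mul, Matrix.one_mul, Matrix.mul_one, hzz, hxx, hxy, hyx, hzx, hxz,
    smul_add, smul_smul, neg_smul, smul_neg, mul_neg, neg_mul, neg_neg]
  simp only [triple, Matrix.smul_kronecker, Matrix.kronecker_smul, smul_smul, smul_add,
    Matrix.one_kronecker_one, neg_smul, smul_neg]
  match_scalars <;> norm_num [Complex.ext_iff]

lemma hBJ2 : Bm * J2 = -Km := by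
  simp only [tJ1, tJ2, tBm, tKm, Matrix.smul_mul, Matrix.mul_smul, Matrix.mul_add,
    Matrix.add_mul, triple_mul, Matrix.one_mul, Matrix.mul_one, hzz, hxx, hxy, hyx, hzx, hxz,
    smul_add, smul_smul, neg_smul, smul_neg, mul_neg, neg_mul, neg_neg]
  simp only [triple, Matrix.smul_kronecker, Matrix.kronecker_smul, smul_smul, smul_add,
    Matrix.one_kronecker_one, neg_smul, smul_neg]
  match_scalars <;> norm_num [Complex.ext_iff]

/-! ### Exponential of a "square root of -1" -/

lemma exp_smul_of_sq_eq_neg_one (J : Spin3) (hJ : J * J = -1) (x : ℝ) :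
    exp ((x : ℂ) • J) = (Real.cos x : ℂ) • (1 : Spin3) + (Real.sin x : ℂ) • J := by
  letI : SeminormedRing Spin3 := Matrix.linftyOpSemiNormedRing
  letI : NormedRing Spin3 := Matrix.linftyOpNormedRing
  letI : NormedAlgebra ℝ Spin3 := Matrix.linftyOpNormedAlgebra
  let φ : ℂ →ₐ[ℝ] Spin3 :=
  { toFun := fun z => (z.re : ℂ) • (1 : Spin3) + (z.im : ℂ) • J
    map_one' := by simp
    map_mul' := fun z w => by
      simp only [mul_add, add_mul, smul_mul_assoc, mul_smul_comm, one_mul, mul_one, hJ,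
        smul_neg, smul_smul]
      match_scalars <;> simp [Complex.mul_re, Complex.mul_im] <;> ring
    map_zero' := by simp
    map_add' := fun z w => by
      simp only [Complex.add_re, Complex.add_im]
      push_cast
      module
    commutes' := fun r => by
      simp [Algebra.algebraMap_eq_smul_one] }
  have hφc : Continuous φ := φ.toLinearMap.continuous_of_finiteDimensional
  have h1 : φ (NormedSpace.exp ((x : ℂ) * Complex.I)) =
      NormedSpace.exp (φ ((x : ℂ) * Complex.I)) := map_exp φ hφc _
  have h2 : φ ((x : ℂ) * Complex.I) = (x : ℂ) • J := by
    simp [φ, Complex.mul_re, Complex.mul_im]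
  have h3 : NormedSpace.exp ((x : ℂ) * Complex.I) =
      Complex.cos x + Complex.sin x * Complex.I := by
    rw [← Complex.exp_eq_exp_ℂ, Complex.exp_mul_I]
  have h4 : (NormedSpace.exp : Spin3 → Spin3) = NormedSpace.exp := rfl
  rw [h2, h4] at h1
  rw [← h1, h3]
  simp only [φ, AlgHom.coe_mk, RingHom.coe_mk, MonoidHom.coe_mk, OneHom.coe_mk,
    Complex.add_re, Complex.add_im, Complex.mul_re, Complex.mul_im, Complex.I_re, Complex.I_im,
    Complex.cos_ofReal_re, Complex.cos_ofReal_im, Complex.sin_ofReal_re, Complex.sin_ofReal_im]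
  match_scalars <;> simp [Complex.ofReal_cos, Complex.ofReal_sin] <;> ring

/-! ### The main theorem -/

theorem trilinear_conjugation_AB (θ : ℝ) :
    let A : Spin3 := (-Complex.I) • (I1z * I2x + I2x * I3z)
    let B : Spin3 := (-Complex.I) • (I1z * I2y + I2y * I3z)
    exp (((Real.pi : ℂ) / 2) • A) * exp (((θ : ℂ) / 2) • B) *
        exp ((-(Real.pi : ℂ) / 2) • A) =
      exp ((-((θ : ℂ) * Complex.I)) • (I1z * I2z * I3z + (1/4 : ℂ) • I2z)) := by
  intro A B
  have hA : A = (-Complex.I) • (I1z * I2x + I2x * I3z) := rfl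
  have hB : B = Bm := rfl
  set c : ℝ := Real.cos (π/8) with hc
  set s : ℝ := Real.sin (π/8) with hs
  have hcs : (c : ℂ)^2 - (s : ℂ)^2 = 2 * s * c := by
    have h1 : c^2 - s^2 = 2 * s * c := by
      have e1 : Real.cos (2 * (π/8)) = 2 * c^2 - 1 := Real.cos_two_mul _
      have e2 : Real.sin (2 * (π/8)) = 2 * s * c := Real.sin_two_mul _
      have e3 : (2 : ℝ) * (π/8) = π/4 := by ring
      have e4 : s^2 + c^2 = 1 := Real.sin_sq_add_cos_sq _
      rw [e3] at e1 e2
      rw [Real.cos_pi_div_four] at e1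
      rw [Real.sin_pi_div_four] at e2
      nlinarith [e1, e2, e4]
    exact_mod_cast congrArg (fun t : ℝ => (t : ℂ)) h1
  -- the exponents in terms of J1, J2
  have hX : ((Real.pi : ℂ) / 2) • A = ((π/8 : ℝ) : ℂ) • J1 + ((π/8 : ℝ) : ℂ) • J2 := by
    rw [hA, J1, J2]
    push_cast
    match_scalars <;> ring
  have hXneg : (-(Real.pi : ℂ) / 2) • A = ((-(π/8) : ℝ) : ℂ) • J1 + ((-(π/8) : ℝ) : ℂ) • J2 := by
    rw [hA, J1, J2]
    push_cast
    match_scalars <;> ring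
  have hcomm : ∀ (a b : ℂ), Commute (a • J1) (b • J2) := fun a b =>
    (Commute.smul_left (Commute.smul_right (hJcomm) b) a)
  -- closed form for U and V
  have hUform : ∀ (x : ℝ), exp (((x : ℝ) : ℂ) • J1 + ((x : ℝ) : ℂ) • J2) =
      ((Real.cos x : ℂ) • (1:Spin3) + (Real.sin x : ℂ) • J1) *
        ((Real.cos x : ℂ) • (1:Spin3) + (Real.sin x : ℂ) • J2) := by
    intro x
    rw [Matrix.exp_add_of_commute _ _ (hcomm _ _), exp_smul_of_sq_eq_neg_one J1 hJ1sq,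
      exp_smul_of_sq_eq_neg_one J2 hJ2sq]
  set U : Spin3 := exp (((Real.pi : ℂ) / 2) • A) with hU
  set V : Spin3 := exp ((-(Real.pi : ℂ) / 2) • A) with hV
  have hUc : U = ((c : ℂ) • (1:Spin3) + (s : ℂ) • J1) * ((c : ℂ) • (1:Spin3) + (s : ℂ) • J2) := by
    rw [hU, hX, hUform]
  have hUV : U * V = 1 := by
    rw [hU, hV, ← Matrix.exp_add_of_commute]
    · have h0 : ((Real.pi : ℂ) / 2) • A + (-(Real.pi : ℂ) / 2) • A = 0 := by module
      rw [h0, NormedSpace.exp_zero]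
    · exact ((Commute.refl A).smul_left _).smul_right _
  have hVU : V * U = 1 := by
    rw [hU, hV, ← Matrix.exp_add_of_commute]
    · have h0 : (-(Real.pi : ℂ) / 2) • A + ((Real.pi : ℂ) / 2) • A = 0 := by module
      rw [h0, NormedSpace.exp_zero]
    · exact ((Commute.refl A).smul_left _).smul_right _
  -- the key conjugation identity
  have hUB : U * Bm = Km * U := by
    rw [hUc]
    have expand1 : (((c : ℂ) • (1:Spin3) + (s : ℂ) • J1) * ((c : ℂ) • (1:Spin3) + (s : ℂ) • J2))
        * Bm = ((c:ℂ)*(c:ℂ)) • Bm + ((c:ℂ)*(s:ℂ)) • (J2 * Bm) + ((s:ℂ)*(c:ℂ)) • (J1 * Bm)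
          + ((s:ℂ)*(s:ℂ)) • (J1 * (J2 * Bm)) := by
      simp only [mul_add, add_mul, smul_mul_assoc, mul_smul_comm, one_mul, mul_one, smul_smul,
        mul_assoc]
      module
    have expand2 : Km * (((c : ℂ) • (1:Spin3) + (s : ℂ) • J1) * ((c : ℂ) • (1:Spin3)
        + (s : ℂ) • J2)) = ((c:ℂ)*(c:ℂ)) • Km + ((c:ℂ)*(s:ℂ)) • (Km * J2)
          + ((s:ℂ)*(c:ℂ)) • (Km * J1) + ((s:ℂ)*(s:ℂ)) • ((Km * J1) * J2) := by
      simp only [mul_add, add_mul, smul_mul_assoc, mul_smul_comm, one_mul, mul_one, smul_smul,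
        ← mul_assoc]
      module
    rw [expand1, expand2, hJ2B, hJ1B, hJ1K, hKJ1, hKJ2, hBJ2]
    match_scalars <;> first
      | linear_combination hcs
      | linear_combination -hcs
  -- build the unit
  let u : Spin3ˣ := ⟨U, V, hUV, hVU⟩
  have key : U * (((θ : ℂ) / 2) • B) * V = (-((θ : ℂ) * Complex.I)) •
      (I1z * I2z * I3z + (1/4 : ℂ) • I2z) := by
    rw [hB]
    calc U * (((θ : ℂ) / 2) • Bm) * V = ((θ : ℂ) / 2) • ((U * Bm) * V) := by
          rw [mul_smul_comm, Matrix.smul_mul]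
      _ = ((θ : ℂ) / 2) • (Km * (U * V)) := by rw [hUB, mul_assoc]
      _ = ((θ : ℂ) / 2) • Km := by rw [hUV, mul_one]
      _ = (-((θ : ℂ) * Complex.I)) • (I1z * I2z * I3z + (1/4 : ℂ) • I2z) := by
          rw [Km]; match_scalars <;> ring
  calc U * exp (((θ : ℂ) / 2) • B) * V
      = ↑u * exp (((θ : ℂ) / 2) • B) * ↑u⁻¹ := rfl
    _ = NormedSpace.exp ((↑u : Spin3) * (((θ : ℂ) / 2) • B) * ↑u⁻¹) := (Matrix.exp_units_conj u _).symm
    _ = exp ((-((θ : ℂ) * Complex.I)) • (I1z * I2z * I3z + (1/4 : ℂ) • I2z)) := by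
        rw [show ((↑u : Spin3) * (((θ : ℂ) / 2) • B) * ↑u⁻¹ : Spin3)
          = U * (((θ : ℂ) / 2) • B) * V from rfl, key]
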